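/- For every positive integer k and every even degree d ≥ 2, there exists a symmetric subset S of Z_{(⌊d/(2k)⌋·2+1)^k} (i.e., S = −S, 0 ∉ S) of size at most d such that every element of the group is a sum of at most k elements of S. Consequently, CC(d,k) ≥ (2·⌊d/(2k)⌋+1)^k, where CC(d,k) is the largest order of an undirected circulant graph of degree d and diameter k; in particular liminf_{d→∞} CC(d,k)/d^k ≥ 1/k^k. -/

import Mathlib

open Filter
open Topology

/-- `Z_n` admits a symmetric connection set of size at most `d` (not containing `0`)
such that every element is a sum of at most `k` elements of it. -/
def HasUndirCirc (n d k : ℕ) : Prop :=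
  ∃ S : Finset (ZMod n), (0 : ZMod n) ∉ S ∧ (∀ s ∈ S, -s ∈ S) ∧ S.card ≤ d ∧
    ∀ x : ZMod n, ∃ l : List (ZMod n), l.length ≤ k ∧ (∀ a ∈ l, a ∈ S) ∧ l.sum = x

/-- The largest order of an undirected circulant graph of degree at most `d`
and diameter at most `k`. -/
noncomputable def CC (d k : ℕ) : ℕ := sSup {n | HasUndirCirc n d k}

lemma digits_lemma (m : ℕ) : ∀ k : ℕ, ∀ z : ℤ, ∃ l : List ℤ,
    l.length ≤ k ∧
    (∀ a ∈ l, ∃ h : ℤ, ∃ j : ℕ, h ≠ 0 ∧ |h| ≤ (m : ℤ) ∧ j < k ∧ a = h * (2 * m + 1) ^ j) ∧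
    ((2 * (m : ℤ) + 1) ^ k ∣ z - l.sum) := by
  intro k
  induction k with
  | zero => intro z; exact ⟨[], by simp, by simp, by simp⟩
  | succ k ih =>
    intro z
    set r : ℤ := 2 * (m : ℤ) + 1 with hr
    have hrpos : 0 < r := by positivity
    set c : ℤ := (z + m) % r - m with hc
    have hcb : |c| ≤ (m : ℤ) := by
      have h1 : 0 ≤ (z + m) % r := Int.emod_nonneg _ (by positivity)
      have h2 : (z + m) % r < r := Int.emod_lt_of_pos _ hrpos
      rw [abs_le]; omega
    have hdvd : r ∣ z - c := by
      have : r ∣ (z + m) - (z + m) % r := Int.dvd_self_sub_of_emod_eq rfl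
      have heq : z - c = (z + m) - (z + m) % r := by rw [hc]; ring
      rwa [heq]
    obtain ⟨z', hz'⟩ := hdvd
    obtain ⟨l', hlen, hmem, hdv⟩ := ih z'
    have hsum : ∀ (L : List ℤ), (L.map (· * r)).sum = L.sum * r := by
      intro L; induction L with
      | nil => simp
      | cons a t iht => simp [iht]; ring
    by_cases hc0 : c = 0
    · refine ⟨l'.map (· * r), by simpa using hlen.trans (Nat.le_succ k), ?_, ?_⟩
      · intro a ha
        obtain ⟨b, hb, rfl⟩ := List.mem_map.mp ha
        obtain ⟨h, j, h1, h2, h3, h4⟩ := hmem b hb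
        exact ⟨h, j + 1, h1, h2, by omega, by rw [h4]; ring⟩
      · obtain ⟨w, hw⟩ := hdv
        refine ⟨w, ?_⟩
        rw [hsum]
        linear_combination hz' + r * hw + hc0
    · refine ⟨c :: l'.map (· * r), by simpa using hlen, ?_, ?_⟩
      · intro a ha
        rcases List.mem_cons.mp ha with rfl | ha
        · exact ⟨c, 0, hc0, hcb, by omega, by ring⟩
        · obtain ⟨b, hb, rfl⟩ := List.mem_map.mp ha
          obtain ⟨h, j, h1, h2, h3, h4⟩ := hmem b hb
          exact ⟨h, j + 1, h1, h2, by omega, by rw [h4]; ring⟩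
      · obtain ⟨w, hw⟩ := hdv
        refine ⟨w, ?_⟩
        rw [List.sum_cons, hsum]
        linear_combination hz' + r * hw

lemma hasUndirCirc_construction (d k : ℕ) (hk : 0 < k) :
    HasUndirCirc ((2 * (d / (2 * k)) + 1) ^ k) d k := by
  set m : ℕ := d / (2 * k) with hm
  set r : ℕ := 2 * m + 1 with hr
  set n : ℕ := r ^ k with hn
  have hrpos : 0 < r := by positivity
  have hnpos : 0 < n := by positivity
  haveI : NeZero n := ⟨hnpos.ne'⟩
  set S : Finset (ZMod n) :=
    (((Finset.Icc (-(m : ℤ)) m).erase 0) ×ˢ Finset.range k).image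
      (fun p => (p.1 : ZMod n) * (r : ZMod n) ^ p.2) with hS
  have hmemS : ∀ (h : ℤ) (j : ℕ), h ≠ 0 → |h| ≤ (m : ℤ) → j < k →
      ((h : ZMod n) * (r : ZMod n) ^ j) ∈ S := by
    intro h j h0 hb hj
    rw [hS, Finset.mem_image]
    refine ⟨(h, j), ?_, rfl⟩
    rw [Finset.mem_product]
    exact ⟨Finset.mem_erase.mpr ⟨h0, Finset.mem_Icc.mpr (abs_le.mp hb)⟩, Finset.mem_range.mpr hj⟩
  refine ⟨S, ?_, ?_, ?_, ?_⟩
  · -- 0 ∉ S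
    intro h0
    rw [hS, Finset.mem_image] at h0
    obtain ⟨⟨h, j⟩, hp, heq⟩ := h0
    rw [Finset.mem_product, Finset.mem_erase, Finset.mem_Icc, Finset.mem_range] at hp
    obtain ⟨⟨hne, hlo, hhi⟩, hj⟩ := hp
    have hcast : (((h * (r : ℤ) ^ j) : ℤ) : ZMod n) = 0 := by
      rw [Int.cast_mul, Int.cast_pow, Int.cast_natCast]; exact heq
    have hdvd : (n : ℤ) ∣ h * (r : ℤ) ^ j := (ZMod.intCast_zmod_eq_zero_iff_dvd _ _).mp hcast
    have hdvd' : n ∣ (h * (r : ℤ) ^ j).natAbs := by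
      have := Int.natAbs_dvd_natAbs.mpr hdvd
      simpa using this
    rw [Int.natAbs_mul, Int.natAbs_pow] at hdvd'
    have hrabs : ((r : ℤ)).natAbs = r := Int.natAbs_natCast r
    rw [hrabs] at hdvd'
    have h1 : 1 ≤ h.natAbs := by
      rcases Int.natAbs_eq_zero.not.mpr hne with h'
      omega
    have habs : h.natAbs ≤ m := by
      have : (h.natAbs : ℤ) ≤ (m : ℤ) := by rw [Int.natCast_natAbs]; exact abs_le.mpr ⟨hlo, hhi⟩
      exact_mod_cast this
    have hle : n ≤ h.natAbs * r ^ j := Nat.le_of_dvd (by positivity) hdvd'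
    have h2 : h.natAbs * r ^ j ≤ m * r ^ (k - 1) :=
      Nat.mul_le_mul habs (Nat.pow_le_pow_right hrpos (by omega))
    have h3 : m * r ^ (k - 1) < r * r ^ (k - 1) :=
      by
        have hp : 0 < r ^ (k - 1) := by positivity
        exact (Nat.mul_lt_mul_right hp).mpr (by omega)
    have h4 : r * r ^ (k - 1) = n := by
      rw [hn, ← pow_succ']
      congr 1
      omega
    omega
  · -- symmetric
    intro s hs
    rw [hS, Finset.mem_image] at hs
    obtain ⟨⟨h, j⟩, hp, rfl⟩ := hs
    rw [Finset.mem_product, Finset.mem_erase, Finset.mem_Icc, Finset.mem_range] at hp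
    obtain ⟨⟨hne, hlo, hhi⟩, hj⟩ := hp
    have : -((h : ZMod n) * (r : ZMod n) ^ j) = ((-h : ℤ) : ZMod n) * (r : ZMod n) ^ j := by
      push_cast; ring
    rw [this]
    exact hmemS (-h) j (neg_ne_zero.mpr hne) (by rw [abs_neg, abs_le]; exact ⟨hlo, hhi⟩) hj
  · -- card
    calc S.card ≤ (((Finset.Icc (-(m : ℤ)) m).erase 0) ×ˢ Finset.range k).card :=
          Finset.card_image_le
      _ = ((Finset.Icc (-(m : ℤ)) m).erase 0).card * k := by rw [Finset.card_product, Finset.card_range]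
      _ ≤ (2 * m) * k := by
          apply Nat.mul_le_mul_right
          have h0 : (0 : ℤ) ∈ Finset.Icc (-(m : ℤ)) m := by simp
          rw [Finset.card_erase_of_mem h0, Int.card_Icc]
          simp
          omega
      _ ≤ d := by
          have h1 := Nat.div_mul_le_self d (2 * k)
          have h2 : 2 * m * k = m * (2 * k) := by ring
          rw [hm] at h2 ⊢
          omega
  · -- covering
    intro x
    obtain ⟨l, hlen, hmem, hdv⟩ := digits_lemma m k (x.val : ℤ)
    refine ⟨l.map (fun a => ((a : ℤ) : ZMod n)), by simpa using hlen, ?_, ?_⟩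
    · intro a ha
      obtain ⟨b, hb, rfl⟩ := List.mem_map.mp ha
      obtain ⟨h, j, h1, h2, h3, h4⟩ := hmem b hb
      have : ((b : ℤ) : ZMod n) = (h : ZMod n) * (r : ZMod n) ^ j := by
        rw [h4]; push_cast; rw [hr]; push_cast; ring
      rw [this]
      exact hmemS h j h1 h2 h3
    · have hsum : (l.map (fun a => ((a : ℤ) : ZMod n))).sum = ((l.sum : ℤ) : ZMod n) :=
        (map_list_sum (Int.castRingHom (ZMod n)) l).symm
      rw [hsum]
      have hdvd2 : (n : ℤ) ∣ (x.val : ℤ) - l.sum := by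
        have : ((n : ℤ)) = (2 * (m : ℤ) + 1) ^ k := by rw [hn, hr]; push_cast; ring
        rw [this]; exact hdv
      have : ((l.sum : ℤ) : ZMod n) = (((x.val : ℤ)) : ZMod n) := by
        rw [ZMod.intCast_eq_intCast_iff]
        exact Int.modEq_iff_dvd.mpr hdvd2
      rw [this]
      push_cast
      simp [ZMod.natCast_val, ZMod.cast_id]

lemma hasUndirCirc_bound {n d k : ℕ} (h : HasUndirCirc n d k) : n ≤ (d + 1) ^ k := by
  obtain ⟨S, h0, hsym, hcard, hcov⟩ := h
  set T : Finset (ZMod n) := insert 0 S with hT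
  set σ : (Fin k → T) → ZMod n := fun f => ∑ i, ((f i : ZMod n)) with hσ
  have hsurj : Function.Surjective σ := by
    intro x
    obtain ⟨l, hlen, hmem, hsum⟩ := hcov x
    set l' : List (ZMod n) := l ++ List.replicate (k - l.length) 0 with hl'
    have hlen' : l'.length = k := by
      rw [hl', List.length_append, List.length_replicate]; omega
    have hmem' : ∀ a ∈ l', a ∈ T := by
      intro a ha
      rcases List.mem_append.mp ha with h | h
      · exact Finset.mem_insert_of_mem (hmem a h)
      · rw [List.eq_of_mem_replicate h]; exact Finset.mem_insert_self _ _
    refine ⟨fun i => ⟨l'.get (Fin.cast hlen'.symm i), hmem' _ (l'.get_mem _)⟩, ?_⟩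
    have : σ (fun i => ⟨l'.get (Fin.cast hlen'.symm i), hmem' _ (l'.get_mem _)⟩) =
        ∑ i : Fin l'.length, l'.get i := by
      rw [hσ]
      exact Fintype.sum_equiv (finCongr hlen'.symm) _ _ (fun i => rfl)
    rw [this]
    have : ∑ i : Fin l'.length, l'.get i = l'.sum := by
      simp
    rw [this, hl', List.sum_append, List.sum_replicate, hsum]
    simp
  haveI hfin : Finite (ZMod n) := Finite.of_surjective σ hsurj
  have hne : n ≠ 0 := by
    rintro rfl
    have : Infinite (ZMod 0) := inferInstanceAs (Infinite ℤ)
    exact not_finite (ZMod 0)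
  haveI : NeZero n := ⟨hne⟩
  haveI : Fintype (ZMod n) := Fintype.ofFinite _
  calc n = Fintype.card (ZMod n) := (ZMod.card n).symm
    _ ≤ Fintype.card (Fin k → T) := Fintype.card_le_of_surjective σ hsurj
    _ = (Fintype.card T) ^ k := by rw [Fintype.card_fun]; simp
    _ ≤ (d + 1) ^ k := by
        apply Nat.pow_le_pow_left
        rw [Fintype.card_coe]
        calc T.card ≤ S.card + 1 := Finset.card_insert_le _ _
          _ ≤ d + 1 := by omega

lemma bddAbove_circ (d k : ℕ) : BddAbove {n | HasUndirCirc n d k} :=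
  ⟨(d + 1) ^ k, fun _ hn => hasUndirCirc_bound hn⟩

lemma hasUndirCirc_mono {n d d' k : ℕ} (hd : d ≤ d') (h : HasUndirCirc n d k) :
    HasUndirCirc n d' k := by
  obtain ⟨S, h0, hsym, hcard, hcov⟩ := h
  exact ⟨S, h0, hsym, hcard.trans hd, hcov⟩

lemma CC_lower (d k : ℕ) (hk : 0 < k) : (2 * (d / (2 * k)) + 1) ^ k ≤ CC d k :=
  le_csSup (bddAbove_circ d k) (hasUndirCirc_construction d k hk)

theorem stmt_2 (k : ℕ) (hk : 0 < k) :
    (∀ d : ℕ, 2 ≤ d → Even d → HasUndirCirc ((2 * (d / (2 * k)) + 1) ^ k) d k) ∧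
    (∀ d : ℕ, 2 ≤ d → Even d → (2 * (d / (2 * k)) + 1) ^ k ≤ CC d k) ∧
    (1 / (k : ℝ) ^ k ≤ atTop.liminf fun d : ℕ => (CC d k : ℝ) / (d : ℝ) ^ k) := by
  refine ⟨fun d _ _ => hasUndirCirc_construction d k hk,
    fun d _ _ => CC_lower d k hk, ?_⟩
  have hkR : (0 : ℝ) < (k : ℝ) := by exact_mod_cast hk
  set u : ℕ → ℝ := fun d => (((d : ℝ) - 2 * k) / (k * d)) ^ k with hu
  set v : ℕ → ℝ := fun d => (CC d k : ℝ) / (d : ℝ) ^ k with hv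
  have hlb : ∀ d : ℕ, 2 * k + 1 ≤ d → u d ≤ v d := by
    intro d hd
    have hd0 : (0 : ℝ) < (d : ℝ) := by
      have : 0 < d := by omega
      exact_mod_cast this
    set d' : ℕ := 2 * (d / 2) with hd'
    have hd'le : d' ≤ d := by
      have := Nat.div_mul_le_self d 2; omega
    set q : ℕ := d' / (2 * k) with hq
    have h1 : (2 * q + 1) ^ k ≤ CC d k :=
      le_csSup (bddAbove_circ d k)
        (hasUndirCirc_mono hd'le (hasUndirCirc_construction d' k hk))
    have e1 := Nat.div_add_mod d' (2 * k)
    have e2 : d' % (2 * k) < 2 * k := Nat.mod_lt _ (by omega)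
    have e3 : d ≤ d' + 1 := by omega
    have e1R : ((2 * k * q + d' % (2 * k) : ℕ) : ℝ) = ((d' : ℕ) : ℝ) := by exact_mod_cast e1
    push_cast at e1R
    have e2R : ((d' % (2 * k) : ℕ) : ℝ) < 2 * k := by exact_mod_cast e2
    have e3R : (d : ℝ) ≤ (d' : ℝ) + 1 := by exact_mod_cast e3
    have hreal : ((d : ℝ) - 2 * k) / k ≤ ((2 * q + 1 : ℕ) : ℝ) := by
      rw [div_le_iff₀ hkR]
      push_cast
      have hk1R : (1 : ℝ) ≤ k := by exact_mod_cast hk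
      nlinarith [hk1R]
    have hnn : (0 : ℝ) ≤ ((d : ℝ) - 2 * k) / k := by
      apply div_nonneg _ hkR.le
      have : (2 * k : ℝ) ≤ d := by exact_mod_cast (by omega : 2 * k ≤ d)
      linarith
    have step1 : u d = (((d : ℝ) - 2 * k) / k) ^ k / (d : ℝ) ^ k := by
      rw [hu, ← div_pow, div_div]
    rw [step1, hv]
    apply (div_le_div_iff_of_pos_right (by positivity : (0:ℝ) < (d : ℝ) ^ k)).mpr
    calc (((d : ℝ) - 2 * k) / k) ^ k ≤ (((2 * q + 1 : ℕ) : ℝ)) ^ k :=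
          pow_le_pow_left₀ hnn hreal k
      _ ≤ ((CC d k : ℕ) : ℝ) := by exact_mod_cast Nat.cast_le.mpr h1
  have hbase : Tendsto (fun d : ℕ => ((d : ℝ) - 2 * k) / (k * d)) atTop (𝓝 (1 / k)) := by
    have heq : ∀ᶠ d : ℕ in atTop, (1 - (2 * k) / (d : ℝ)) * (1 / k) =
        ((d : ℝ) - 2 * k) / (k * d) := by
      filter_upwards [eventually_ge_atTop 1] with d hd
      have hd0 : (d : ℝ) ≠ 0 := by
        have : 0 < d := hd
        positivity
      rw [one_sub_div hd0, div_mul_div_comm, mul_one, mul_comm (d : ℝ) (k : ℝ)]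
    have h0 : Tendsto (fun d : ℕ => (1 - (2 * k) / (d : ℝ)) * (1 / k)) atTop
        (𝓝 ((1 - 0) * (1 / k))) :=
      ((tendsto_const_nhds.sub (tendsto_const_div_atTop_nhds_zero_nat (2 * (k : ℝ)))).mul
        tendsto_const_nhds)
    have := h0.congr' heq
    simpa using this
  have htend : Tendsto u atTop (𝓝 (1 / (k : ℝ) ^ k)) := by
    have h := hbase.pow k
    rw [show ((1 : ℝ) / k) ^ k = 1 / (k : ℝ) ^ k by rw [div_pow, one_pow]] at h
    exact h
  have hulim : atTop.liminf u = 1 / (k : ℝ) ^ k := htend.liminf_eq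
  rw [← hulim]
  apply liminf_le_liminf
  · filter_upwards [eventually_ge_atTop (2 * k + 1)] with d hd using hlb d hd
  · exact htend.isBoundedUnder_ge
  · apply isCoboundedUnder_ge_of_eventually_le (x := (2 : ℝ) ^ k) atTop
    filter_upwards [eventually_ge_atTop 1] with d hd
    have hd0 : (0 : ℝ) < (d : ℝ) := by exact_mod_cast hd
    have hCC : CC d k ≤ (d + 1) ^ k := csSup_le' (fun n hn => hasUndirCirc_bound hn)
    have h1 : ((CC d k : ℕ) : ℝ) ≤ ((d : ℝ) + 1) ^ k := by
      have h := (Nat.cast_le (α := ℝ)).mpr hCC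
      push_cast at h
      linarith
    have h2 : ((d : ℝ) + 1) ^ k ≤ (2 * d) ^ k := by
      apply pow_le_pow_left₀ (by positivity)
      have : (1 : ℝ) ≤ d := by exact_mod_cast hd
      linarith
    rw [hv, div_le_iff₀ (by positivity)]
    calc ((CC d k : ℕ) : ℝ) ≤ (2 * d) ^ k := h1.trans h2
      _ = 2 ^ k * (d : ℝ) ^ k := by rw [mul_pow]
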